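/- If X_1, X_2, X_3 are i.i.d. real-valued random variables with continuous c.d.f. F and finite expectation, then E[3·max(X_1,X_2,X_3)] > E[max(X_1,X_2)] + E[max(X_1,X_3)] + E[max(X_2,X_3)]; equivalently, with β_2 = E[X_1·F(X_1)] and β_3 = E[X_1·F(X_1)^2], one has 3β_3 − 2β_2 > 0. -/

import Mathlib

open MeasureTheory ProbabilityTheory Set Filter Topology

set_option linter.unusedSectionVars false


lemma noAtoms_of_cont_cdf (μ : Measure ℝ) [IsProbabilityMeasure μ]
    {F : ℝ → ℝ} (hF : ∀ x, F x = (μ (Iic x)).toReal) (hFc : Continuous F) (x : ℝ) :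
    μ {x} = 0 := by
  have hIio : μ (Iio x) = μ (Iic x) := by
    have hs : Monotone (fun n : ℕ => Iic (x - 1/(n+1))) := by
      intro a b hab
      apply Iic_subset_Iic.2
      have : (a:ℝ) ≤ b := by exact_mod_cast hab
      have h1 : (1:ℝ)/(b+1) ≤ 1/(a+1) := by
        apply one_div_le_one_div_of_le <;> [positivity; linarith]
      linarith
    have hU : (⋃ n : ℕ, Iic (x - 1/(n+1))) = Iio x := by
      ext y
      simp only [mem_iUnion, mem_Iic, mem_Iio]
      constructor
      · rintro ⟨n, hn⟩
        have : (0:ℝ) < 1/(n+1) := by positivity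
        linarith
      · intro hy
        obtain ⟨n, hn⟩ := exists_nat_one_div_lt (sub_pos.2 hy)
        exact ⟨n, by linarith⟩
    have h1 : Tendsto (fun n : ℕ => μ (Iic (x - 1/(n+1)))) atTop (𝓝 (μ (Iio x))) := by
      rw [← hU]
      exact tendsto_measure_iUnion_atTop hs
    have h2 : Tendsto (fun n : ℕ => μ (Iic (x - 1/(n+1)))) atTop (𝓝 (μ (Iic x))) := by
      have hx : Tendsto (fun n : ℕ => x - 1/((n:ℝ)+1)) atTop (𝓝 x) := by
        have := tendsto_one_div_add_atTop_nhds_zero_nat (𝕜 := ℝ)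
        have := this.const_sub x  -- x - 1/(n+1) → x - 0
        simpa using this
      have hFt : Tendsto (fun n : ℕ => F (x - 1/(n+1))) atTop (𝓝 (F x)) :=
        (hFc.tendsto x).comp hx
      have : Tendsto (fun n : ℕ => ENNReal.ofReal (F (x - 1/(n+1)))) atTop
          (𝓝 (ENNReal.ofReal (F x))) := (ENNReal.continuous_ofReal.tendsto _).comp hFt
      have he : ∀ y : ℝ, ENNReal.ofReal (F y) = μ (Iic y) := fun y => by
        rw [hF y, ENNReal.ofReal_toReal (measure_ne_top μ _)]
      simpa only [he] using this
    exact tendsto_nhds_unique h1 h2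
  have : {x} = Iic x \ Iio x := by
    ext y; simp only [mem_singleton_iff, mem_diff, mem_Iic, mem_Iio, not_lt]
    constructor
    · rintro rfl; exact ⟨le_refl _, le_refl _⟩
    · rintro ⟨h1, h2⟩; exact le_antisymm h1 h2
  rw [this, measure_diff Iio_subset_Iic_self measurableSet_Iio.nullMeasurableSet
    (measure_ne_top μ _), hIio, tsub_self]


lemma sum_pair_max_le (a b c : ℝ) :
    max a b + max a c + max b c ≤ 3 * max a (max b c) := by
  simp only [max_def]
  split_ifs <;> linarith

lemma sum_pair_max_lt (a b c : ℝ) (hab : a ≠ b) (hac : a ≠ c) (hbc : b ≠ c) :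
    max a b + max a c + max b c < 3 * max a (max b c) := by
  rcases hab.lt_or_gt with h1|h1 <;> rcases hac.lt_or_gt with h2|h2 <;>
    rcases hbc.lt_or_gt with h3|h3 <;>
    simp only [max_def] <;> split_ifs <;> linarith

lemma integrable_of_map' {γ : Type*} [MeasurableSpace γ] {ν : Measure γ} {g : γ → ℝ} {μ : Measure ℝ}
    (hg : Measurable g) (hmap : ν.map g = μ) (hid : Integrable id μ) : Integrable g ν := by
  have h2 := (integrable_map_measure (f := g) (g := id) (μ := ν)
    (by rw [hmap]; exact hid.1) hg.aemeasurable)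
  rw [hmap] at h2
  exact h2.1 hid

lemma max3_eq (a b c : ℝ) (hab : a ≠ b) (hac : a ≠ c) (hbc : b ≠ c) :
    max a (max b c) = (if b < a ∧ c < a then a else 0) + (if a < b ∧ c < b then b else 0)
      + (if a < c ∧ b < c then c else 0) := by
  rcases hab.lt_or_gt with h1|h1 <;> rcases hac.lt_or_gt with h2|h2 <;>
    rcases hbc.lt_or_gt with h3|h3 <;>
    rw [max_def, max_def] <;> split_ifs <;> first | linarith | tauto

section Triple
variable (μ : Measure ℝ) [IsProbabilityMeasure μ] [NullSingletonClass μ]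

noncomputable def e2 : (ℝ × ℝ × ℝ) ≃ᵐ (ℝ × ℝ × ℝ) :=
  (MeasurableEquiv.prodAssoc.symm.trans
    ((MeasurableEquiv.prodComm.prodCongr (MeasurableEquiv.refl ℝ)).trans
      MeasurableEquiv.prodAssoc))

example (p : ℝ × ℝ × ℝ) : e2 p = (p.2.1, (p.1, p.2.2)) := rfl

lemma e2_mp : MeasurePreserving (⇑e2) (μ.prod (μ.prod μ)) (μ.prod (μ.prod μ)) := by
  have h1 := (measurePreserving_prodAssoc μ μ μ).symm
  have h2 : MeasurePreserving (Prod.map (Prod.swap : ℝ × ℝ → ℝ × ℝ) (id : ℝ → ℝ))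
      ((μ.prod μ).prod μ) ((μ.prod μ).prod μ) :=
    (Measure.measurePreserving_swap).prod (MeasurePreserving.id μ)
  have h3 := measurePreserving_prodAssoc μ μ μ
  exact h3.comp (h2.comp h1)
end Triple

section Triple2
variable (μ : Measure ℝ) [IsProbabilityMeasure μ] [NullSingletonClass μ]

noncomputable def e3 : (ℝ × ℝ × ℝ) ≃ᵐ (ℝ × ℝ × ℝ) :=
  ((MeasurableEquiv.refl ℝ).prodCongr MeasurableEquiv.prodComm).trans e2

example (p : ℝ × ℝ × ℝ) : e3 p = (p.2.2, (p.1, p.2.1)) := rfl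

lemma e3_mp : MeasurePreserving (⇑e3) (μ.prod (μ.prod μ)) (μ.prod (μ.prod μ)) :=
  (e2_mp μ).comp ((MeasurePreserving.id μ).prod Measure.measurePreserving_swap)

lemma diag_null' : (μ.prod μ) {p : ℝ × ℝ | p.1 = p.2} = 0 := by
  rw [Measure.prod_apply (measurableSet_eq_fun measurable_fst measurable_snd)]
  have h : ∀ x : ℝ, μ {a : ℝ | x = a} = 0 := by
    intro x
    have : {a : ℝ | x = a} = {x} := by ext y; simp [eq_comm]
    rw [this]; exact measure_singleton x
  simp only [Set.preimage_setOf_eq]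
  simp [h]

lemma d12_null : (μ.prod (μ.prod μ)) {p : ℝ × ℝ × ℝ | p.1 = p.2.1} = 0 := by
  rw [Measure.prod_apply (measurableSet_eq_fun measurable_fst measurable_snd.fst)]
  have h : ∀ x : ℝ, (μ.prod μ) {a : ℝ × ℝ | x = a.1} = 0 := by
    intro x
    have : {a : ℝ × ℝ | x = a.1} = ({x} : Set ℝ) ×ˢ univ := by
      ext q
      simp only [Set.mem_setOf_eq, Set.mem_prod, Set.mem_singleton_iff, Set.mem_univ, and_true,
        true_and, eq_comm]
    rw [this, Measure.prod_prod, measure_singleton, zero_mul]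
  simp only [Set.preimage_setOf_eq]
  simp [h]

lemma d13_null : (μ.prod (μ.prod μ)) {p : ℝ × ℝ × ℝ | p.1 = p.2.2} = 0 := by
  rw [Measure.prod_apply (measurableSet_eq_fun measurable_fst measurable_snd.snd)]
  have h : ∀ x : ℝ, (μ.prod μ) {a : ℝ × ℝ | x = a.2} = 0 := by
    intro x
    have : {a : ℝ × ℝ | x = a.2} = univ ×ˢ ({x} : Set ℝ) := by
      ext q
      simp only [Set.mem_setOf_eq, Set.mem_prod, Set.mem_singleton_iff, Set.mem_univ, and_true,
        true_and, eq_comm]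
    rw [this, Measure.prod_prod, measure_singleton, mul_zero]
  simp only [Set.preimage_setOf_eq]
  simp [h]

lemma d23_null : (μ.prod (μ.prod μ)) {p : ℝ × ℝ × ℝ | p.2.1 = p.2.2} = 0 := by
  rw [Measure.prod_apply (measurableSet_eq_fun measurable_snd.fst measurable_snd.snd)]
  have h : ∀ _x : ℝ, (μ.prod μ) {a : ℝ × ℝ | a.1 = a.2} = 0 := fun _ => diag_null' μ
  simp only [Set.preimage_setOf_eq]
  simp [diag_null' μ]

end Triple2

section Pair
variable (μ : Measure ℝ) [IsProbabilityMeasure μ] [NullSingletonClass μ]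

lemma inner_int (x : ℝ) : ∫ y, (if y < x then x else 0) ∂μ = (μ (Iic x)).toReal * x := by
  have h : (fun y => if y < x then x else 0) = (Iio x).indicator (fun _ => x) := by
    ext y; simp [Set.indicator_apply]
  rw [h, integral_indicator_const x measurableSet_Iio, smul_eq_mul, measureReal_def,
    measure_congr (Iio_ae_eq_Iic)]

variable {μ} (hid : Integrable id μ)
include hid

lemma g1_integrable : Integrable (fun p : ℝ × ℝ => if p.2 < p.1 then p.1 else 0) (μ.prod μ) := by
  have h1 : Integrable (fun p : ℝ × ℝ => p.1) (μ.prod μ) :=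
    integrable_of_map' measurable_fst (by simp) hid
  refine h1.abs.mono' ?_ (ae_of_all _ fun p => ?_)
  · exact ((measurable_fst.ite (measurableSet_lt measurable_snd measurable_fst)
      measurable_const).aestronglyMeasurable)
  · by_cases h : p.2 < p.1 <;> simp [h, abs_nonneg]

lemma integral_max_pair :
    ∫ p : ℝ × ℝ, max p.1 p.2 ∂(μ.prod μ) = 2 * ∫ x, x * (μ (Iic x)).toReal ∂μ := by
  set g : ℝ × ℝ → ℝ := fun p => if p.2 < p.1 then p.1 else 0 with hg
  have hgi : Integrable g (μ.prod μ) := g1_integrable hid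
  have hgswapi : Integrable (g ∘ Prod.swap) (μ.prod μ) := hgi.swap
  have hae : (fun p : ℝ × ℝ => max p.1 p.2) =ᵐ[μ.prod μ] fun p => g p + g p.swap := by
    rw [Filter.eventuallyEq_iff_exists_mem]
    refine ⟨{p : ℝ × ℝ | p.1 = p.2}ᶜ, ?_, fun p hp => ?_⟩
    · rw [mem_ae_iff, compl_compl]; exact diag_null' μ
    · have hne : p.1 ≠ p.2 := hp
      rcases hne.lt_or_gt with h | h
      · simp only [hg, Prod.fst_swap, Prod.snd_swap]
        rw [if_neg (by simp [not_lt, h.le]), if_pos h, max_eq_right h.le, zero_add]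
      · simp only [hg, Prod.fst_swap, Prod.snd_swap]
        rw [if_pos h, if_neg (by simp [not_lt, h.le]), max_eq_left h.le, add_zero]
  rw [integral_congr_ae hae,
    show (fun p : ℝ × ℝ => g p + g p.swap) = fun p => g p + (g ∘ Prod.swap) p from rfl,
    integral_add hgi hgswapi]
  have hswap : ∫ a : ℝ × ℝ, (g ∘ Prod.swap) a ∂(μ.prod μ) = ∫ p, g p ∂(μ.prod μ) :=
    integral_prod_swap g
  rw [hswap, ← two_mul]
  congr 1
  rw [integral_prod g hgi]
  congr 1
  ext x
  rw [show (fun y => g (x, y)) = fun y => if y < x then x else 0 from rfl, inner_int μ x,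
    mul_comm]
end Pair

section Triple3
variable {μ : Measure ℝ} [IsProbabilityMeasure μ] [NullSingletonClass μ] (hid : Integrable id μ)

/-- The "first coordinate is strict max" summand. -/
noncomputable def T3f : ℝ × ℝ × ℝ → ℝ := fun p => if p.2.1 < p.1 ∧ p.2.2 < p.1 then p.1 else 0

lemma T3f_meas : Measurable T3f := by
  unfold T3f
  exact Measurable.ite
    ((measurableSet_lt measurable_snd.fst measurable_fst).inter
      (measurableSet_lt measurable_snd.snd measurable_fst)) measurable_fst measurable_const

include hid

lemma fst3_integrable : Integrable (fun p : ℝ × ℝ × ℝ => p.1) (μ.prod (μ.prod μ)) :=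
  integrable_of_map' measurable_fst (by simp) hid

lemma T3f_integrable : Integrable T3f (μ.prod (μ.prod μ)) := by
  refine (fst3_integrable hid).abs.mono' T3f_meas.aestronglyMeasurable (ae_of_all _ fun p => ?_)
  unfold T3f
  by_cases h : p.2.1 < p.1 ∧ p.2.2 < p.1 <;> simp [h, abs_nonneg]

lemma integral_T3f :
    ∫ p, T3f p ∂(μ.prod (μ.prod μ)) = ∫ x, x * (μ (Iic x)).toReal ^ 2 ∂μ := by
  rw [integral_prod _ (T3f_integrable hid)]
  congr 1
  ext x
  have h1 : (fun q : ℝ × ℝ => T3f (x, q)) = (Iio x ×ˢ Iio x).indicator (fun _ => x) := by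
    ext q
    simp only [T3f, Set.indicator_apply, Set.mem_prod, mem_Iio]
  rw [show (∫ q, T3f (x, q) ∂(μ.prod μ)) = ∫ q, (Iio x ×ˢ Iio x).indicator (fun _ => x) q
      ∂(μ.prod μ) by rw [h1],
    integral_indicator_const x (measurableSet_Iio.prod measurableSet_Iio), smul_eq_mul, measureReal_def,
    Measure.prod_prod, measure_congr (Iio_ae_eq_Iic), ENNReal.toReal_mul, mul_comm, sq]

lemma integral_max_triple :
    ∫ p : ℝ × ℝ × ℝ, max p.1 (max p.2.1 p.2.2) ∂(μ.prod (μ.prod μ))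
      = 3 * ∫ x, x * (μ (Iic x)).toReal ^ 2 ∂μ := by
  have hν : μ.prod (μ.prod μ) = μ.prod (μ.prod μ) := rfl
  have hTi : Integrable T3f (μ.prod (μ.prod μ)) := T3f_integrable hid
  have hT2i : Integrable (T3f ∘ ⇑e2) (μ.prod (μ.prod μ)) :=
    ((e2_mp μ).integrable_comp_emb e2.measurableEmbedding).2 hTi
  have hT3i : Integrable (T3f ∘ ⇑e3) (μ.prod (μ.prod μ)) :=
    ((e3_mp μ).integrable_comp_emb e3.measurableEmbedding).2 hTi
  have hae : (fun p : ℝ × ℝ × ℝ => max p.1 (max p.2.1 p.2.2)) =ᵐ[μ.prod (μ.prod μ)]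
      fun p => T3f p + (T3f ∘ ⇑e2) p + (T3f ∘ ⇑e3) p := by
    rw [Filter.eventuallyEq_iff_exists_mem]
    refine ⟨({p : ℝ × ℝ × ℝ | p.1 = p.2.1} ∪ {p : ℝ × ℝ × ℝ | p.1 = p.2.2}
      ∪ {p : ℝ × ℝ × ℝ | p.2.1 = p.2.2})ᶜ, ?_, fun p hp => ?_⟩
    · rw [mem_ae_iff, compl_compl]
      exact measure_union_null (measure_union_null (d12_null μ) (d13_null μ)) (d23_null μ)
    · simp only [Set.mem_compl_iff, Set.mem_union, Set.mem_setOf_eq, not_or] at hp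
      obtain ⟨⟨h12, h13⟩, h23⟩ := hp
      exact (max3_eq p.1 p.2.1 p.2.2 h12 h13 h23).trans rfl
  have hsum : Integrable (fun p => T3f p + (T3f ∘ ⇑e2) p) (μ.prod (μ.prod μ)) := hTi.add hT2i
  rw [integral_congr_ae hae, integral_add hsum hT3i, integral_add hTi hT2i]
  simp only [Function.comp_apply]
  rw [(e2_mp μ).integral_comp e2.measurableEmbedding T3f,
    (e3_mp μ).integral_comp e3.measurableEmbedding T3f,
    integral_T3f hid]
  ring
end Triple3

/-- If `X 0, X 1, X 2` are i.i.d. real random variables with continuous c.d.f. `F` and finite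
expectation, then `E[3·max(X₁,X₂,X₃)] > E[max(X₁,X₂)] + E[max(X₁,X₃)] + E[max(X₂,X₃)]`;
equivalently, with `β₂ = E[X₁·F(X₁)]` and `β₃ = E[X₁·F(X₁)²]`, one has `3β₃ − 2β₂ > 0`. -/
theorem expectation_three_mul_max_gt
    {Ω : Type*} [MeasureSpace Ω] [IsProbabilityMeasure (ℙ : Measure Ω)]
    (X : Fin 3 → Ω → ℝ)
    (hXmeas : ∀ j, Measurable (X j))
    (hindep : iIndepFun X ℙ)
    (hident : ∀ j, IdentDistrib (X j) (X 0) ℙ ℙ)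
    (F : ℝ → ℝ)
    (hF : ∀ x, F x = (ℙ {ω | X 0 ω ≤ x}).toReal)
    (hFcont : Continuous F)
    (hint : Integrable (X 0) ℙ) :
    (∫ ω, 3 * max (X 0 ω) (max (X 1 ω) (X 2 ω)) ∂ℙ
        > (∫ ω, max (X 0 ω) (X 1 ω) ∂ℙ) + (∫ ω, max (X 0 ω) (X 2 ω) ∂ℙ)
          + (∫ ω, max (X 1 ω) (X 2 ω) ∂ℙ)) ∧
      3 * (∫ ω, X 0 ω * (F (X 0 ω)) ^ 2 ∂ℙ) - 2 * (∫ ω, X 0 ω * F (X 0 ω) ∂ℙ) > 0 := by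
  have hX0 := hXmeas 0
  set μ := Measure.map (X 0) ℙ with hμdef
  haveI hprob : IsProbabilityMeasure μ := Measure.isProbabilityMeasure_map hX0.aemeasurable
  have hFμ : ∀ x, F x = (μ (Iic x)).toReal := by
    intro x
    rw [hF x, hμdef, Measure.map_apply hX0 measurableSet_Iic]
    rfl
  haveI hNA : NullSingletonClass μ := ⟨fun x => noAtoms_of_cont_cdf μ hFμ hFcont x⟩
  have hid : Integrable id μ :=
    (integrable_map_measure aestronglyMeasurable_id hX0.aemeasurable).2 hint
  have hlaw : ∀ j, Measure.map (X j) ℙ = μ := fun j => (hident j).map_eq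
  have hpair : ∀ i j : Fin 3, i ≠ j → Measure.map (fun ω => (X i ω, X j ω)) ℙ = μ.prod μ := by
    intro i j hij
    rw [(indepFun_iff_map_prod_eq_prod_map_map (hXmeas i).aemeasurable
      (hXmeas j).aemeasurable).1 (hindep.indepFun hij), hlaw i, hlaw j]
  have htrip : Measure.map (fun ω => (X 0 ω, (X 1 ω, X 2 ω))) ℙ = μ.prod (μ.prod μ) := by
    have h1 : IndepFun (X 0) (fun ω => (X 1 ω, X 2 ω)) ℙ :=
      (hindep.indepFun_prodMk hXmeas 1 2 0 (by decide) (by decide)).symm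
    rw [(indepFun_iff_map_prod_eq_prod_map_map hX0.aemeasurable
      ((hXmeas 1).prodMk (hXmeas 2)).aemeasurable).1 h1, hlaw 0, hpair 1 2 (by decide)]
  -- integral conversions
  have hconv2 : ∀ i j : Fin 3, i ≠ j → ∫ ω, max (X i ω) (X j ω) ∂ℙ
      = ∫ p : ℝ × ℝ, max p.1 p.2 ∂(μ.prod μ) := by
    intro i j hij
    rw [← hpair i j hij]
    exact (integral_map ((hXmeas i).prodMk (hXmeas j)).aemeasurable
      (continuous_fst.max continuous_snd).aestronglyMeasurable).symm
  have hconv3 : ∫ ω, max (X 0 ω) (max (X 1 ω) (X 2 ω)) ∂ℙ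
      = ∫ p : ℝ × ℝ × ℝ, max p.1 (max p.2.1 p.2.2) ∂(μ.prod (μ.prod μ)) := by
    rw [← htrip]
    exact (integral_map (hX0.prodMk ((hXmeas 1).prodMk (hXmeas 2))).aemeasurable
      (continuous_fst.max ((continuous_fst.comp continuous_snd).max
        (continuous_snd.comp continuous_snd))).aestronglyMeasurable).symm
  have hb2 : ∫ ω, X 0 ω * F (X 0 ω) ∂ℙ = ∫ x, x * (μ (Iic x)).toReal ∂μ := by
    have h1 : ∫ x, x * F x ∂μ = ∫ ω, X 0 ω * F (X 0 ω) ∂ℙ :=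
      integral_map hX0.aemeasurable (continuous_id.mul hFcont).aestronglyMeasurable
    rw [← h1]
    exact integral_congr_ae (ae_of_all _ fun x => by
      show x * F x = x * (μ (Iic x)).toReal
      rw [hFμ x])
  have hb3 : ∫ ω, X 0 ω * (F (X 0 ω)) ^ 2 ∂ℙ = ∫ x, x * (μ (Iic x)).toReal ^ 2 ∂μ := by
    have h1 : ∫ x, x * F x ^ 2 ∂μ = ∫ ω, X 0 ω * (F (X 0 ω)) ^ 2 ∂ℙ :=
      integral_map hX0.aemeasurable
        (continuous_id.mul (hFcont.pow 2)).aestronglyMeasurable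
    rw [← h1]
    exact integral_congr_ae (ae_of_all _ fun x => by
      show x * F x ^ 2 = x * (μ (Iic x)).toReal ^ 2
      rw [hFμ x])
  -- ties are null
  have htie : ∀ i j : Fin 3, i ≠ j → ℙ {ω | X i ω = X j ω} = 0 := by
    intro i j hij
    have hm : MeasurableSet {p : ℝ × ℝ | p.1 = p.2} :=
      measurableSet_eq_fun measurable_fst measurable_snd
    have he : {ω | X i ω = X j ω} = (fun ω => (X i ω, X j ω)) ⁻¹' {p | p.1 = p.2} := rfl
    rw [he, ← Measure.map_apply ((hXmeas i).prodMk (hXmeas j)) hm, hpair i j hij]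
    exact diag_null' μ
  -- integrability over Ω
  have hXint : ∀ j, Integrable (X j) ℙ := fun j => (hident j).integrable_iff.2 hint
  have hmaxint : ∀ i j : Fin 3, Integrable (fun ω => max (X i ω) (X j ω)) ℙ := by
    intro i j
    have habs : Integrable (fun ω => |X i ω| + |X j ω|) ℙ := (hXint i).abs.add (hXint j).abs
    refine habs.mono'
      ((hXmeas i).max (hXmeas j)).aestronglyMeasurable (ae_of_all _ fun ω => ?_)
    simp only [Real.norm_eq_abs]
    exact (abs_max_le_max_abs_abs).trans (max_le_add_of_nonneg (abs_nonneg _) (abs_nonneg _))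
  have hmax3int : Integrable (fun ω => max (X 0 ω) (max (X 1 ω) (X 2 ω))) ℙ := by
    have habs : Integrable (fun ω => |X 0 ω| + (|X 1 ω| + |X 2 ω|)) ℙ :=
      (hXint 0).abs.add ((hXint 1).abs.add (hXint 2).abs)
    refine habs.mono'
      ((hXmeas 0).max ((hXmeas 1).max (hXmeas 2))).aestronglyMeasurable
      (ae_of_all _ fun ω => ?_)
    simp only [Real.norm_eq_abs]
    have l1 : |max (X 1 ω) (X 2 ω)| ≤ |X 1 ω| + |X 2 ω| :=
      (abs_max_le_max_abs_abs).trans (max_le_add_of_nonneg (abs_nonneg _) (abs_nonneg _))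
    have l0 : |max (X 0 ω) (max (X 1 ω) (X 2 ω))| ≤ |X 0 ω| + |max (X 1 ω) (X 2 ω)| :=
      (abs_max_le_max_abs_abs).trans (max_le_add_of_nonneg (abs_nonneg _) (abs_nonneg _))
    linarith
  -- the difference function
  set f : Ω → ℝ := fun ω => 3 * max (X 0 ω) (max (X 1 ω) (X 2 ω))
    - (max (X 0 ω) (X 1 ω) + (max (X 0 ω) (X 2 ω) + max (X 1 ω) (X 2 ω))) with hfdef
  have hfint : Integrable f ℙ :=
    (hmax3int.const_mul 3).sub ((hmaxint 0 1).add ((hmaxint 0 2).add (hmaxint 1 2)))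
  have hfnn : ∀ ω, 0 ≤ f ω := by
    intro ω
    have := sum_pair_max_le (X 0 ω) (X 1 ω) (X 2 ω)
    simp only [hfdef]
    linarith
  have hgood : ℙ ({ω | X 0 ω = X 1 ω} ∪ {ω | X 0 ω = X 2 ω} ∪ {ω | X 1 ω = X 2 ω})ᶜ = 1 := by
    rw [measure_compl (((measurableSet_eq_fun (hXmeas 0) (hXmeas 1)).union
        (measurableSet_eq_fun (hXmeas 0) (hXmeas 2))).union
        (measurableSet_eq_fun (hXmeas 1) (hXmeas 2))) (measure_ne_top _ _),
      measure_union_null (measure_union_null (htie 0 1 (by decide)) (htie 0 2 (by decide)))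
        (htie 1 2 (by decide))]
    simp
  have hpos : 0 < ∫ ω, f ω ∂ℙ := by
    rw [integral_pos_iff_support_of_nonneg_ae (ae_of_all _ hfnn) hfint]
    have hsub : ({ω | X 0 ω = X 1 ω} ∪ {ω | X 0 ω = X 2 ω} ∪ {ω | X 1 ω = X 2 ω})ᶜ
        ⊆ Function.support f := by
      intro ω hω
      simp only [Set.mem_compl_iff, Set.mem_union, Set.mem_setOf_eq, not_or] at hω
      obtain ⟨⟨h01, h02⟩, h12⟩ := hω
      have := sum_pair_max_lt (X 0 ω) (X 1 ω) (X 2 ω) h01 h02 h12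
      simp only [Function.mem_support, hfdef]
      intro hzero
      rw [sub_eq_zero] at hzero
      linarith
    calc (0 : ENNReal) < 1 := by norm_num
    _ = ℙ (({ω | X 0 ω = X 1 ω} ∪ {ω | X 0 ω = X 2 ω} ∪ {ω | X 1 ω = X 2 ω})ᶜ) := hgood.symm
    _ ≤ ℙ (Function.support f) := measure_mono hsub
  have hsplit : ∫ ω, f ω ∂ℙ = (∫ ω, 3 * max (X 0 ω) (max (X 1 ω) (X 2 ω)) ∂ℙ)
      - ((∫ ω, max (X 0 ω) (X 1 ω) ∂ℙ) + ((∫ ω, max (X 0 ω) (X 2 ω) ∂ℙ)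
        + (∫ ω, max (X 1 ω) (X 2 ω) ∂ℙ))) := by
    have h23 : Integrable (fun ω => max (X 0 ω) (X 2 ω) + max (X 1 ω) (X 2 ω)) ℙ :=
      (hmaxint 0 2).add (hmaxint 1 2)
    have hall : Integrable (fun ω => max (X 0 ω) (X 1 ω)
        + (max (X 0 ω) (X 2 ω) + max (X 1 ω) (X 2 ω))) ℙ := (hmaxint 0 1).add h23
    have h3m : Integrable (fun ω => 3 * max (X 0 ω) (max (X 1 ω) (X 2 ω))) ℙ :=
      hmax3int.const_mul 3
    simp only [hfdef]
    rw [integral_sub h3m hall, integral_add (hmaxint 0 1) h23,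
      integral_add (hmaxint 0 2) (hmaxint 1 2)]
  have part1 : ∫ ω, 3 * max (X 0 ω) (max (X 1 ω) (X 2 ω)) ∂ℙ
      > (∫ ω, max (X 0 ω) (X 1 ω) ∂ℙ) + (∫ ω, max (X 0 ω) (X 2 ω) ∂ℙ)
        + (∫ ω, max (X 1 ω) (X 2 ω) ∂ℙ) := by
    rw [hsplit] at hpos
    linarith
  refine ⟨part1, ?_⟩
  -- part 2
  have hc3 : ∫ ω, 3 * max (X 0 ω) (max (X 1 ω) (X 2 ω)) ∂ℙ
      = 3 * ∫ ω, max (X 0 ω) (max (X 1 ω) (X 2 ω)) ∂ℙ := integral_const_mul 3 _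
  have hmt := integral_max_triple (μ := μ) hid
  have hmp := integral_max_pair (μ := μ) hid
  have hE3 : ∫ ω, max (X 0 ω) (max (X 1 ω) (X 2 ω)) ∂ℙ
      = 3 * ∫ ω, X 0 ω * (F (X 0 ω)) ^ 2 ∂ℙ := by rw [hconv3, hmt, hb3]
  have hE2 : ∀ i j : Fin 3, i ≠ j → ∫ ω, max (X i ω) (X j ω) ∂ℙ
      = 2 * ∫ ω, X 0 ω * F (X 0 ω) ∂ℙ := by
    intro i j hij; rw [hconv2 i j hij, hmp, hb2]
  rw [hc3, hE3, hE2 0 1 (by decide), hE2 0 2 (by decide), hE2 1 2 (by decide)] at part1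
  linarith
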